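/- With the notation of the paratrophic setup: if the matrix P(σ,α) is invertible, then |J_ε| = |J_σ|, the submatrix P(σ,α)_{J_ε,J_σ} (rows in J_ε, columns in J_σ) is invertible, and for every g ∈ G the matrix C_g has rank |J_g|. -/

import Mathlib

open Finset

/-- **Theorem A, (1) ⟹ (2).**  If the σ-paratrophic matrix `P(σ,α)` is invertible, then
`|J_ε| = |J_σ|`, the submatrix `P(σ,α)_{J_ε,J_σ}` is invertible, and for every `g ∈ G`
the matrix `C_g` (with rows indexed by `J_{σg⁻¹} × J_σ`, columns by `J_g`, entry
`c_{rjℓ}` in row `(r,ℓ)`, column `j`) has rank `|J_g|`. -/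
theorem stmt1 (K : Type) [Field K] (G : Type) [Group G] [DecidableEq G]
    (A : Type) [Ring A] [Algebra K A] (𝒜 : G → Submodule K A)
    (h_one : (1 : A) ∈ 𝒜 1)
    (h_mul : ∀ {g h : G} {a b : A}, a ∈ 𝒜 g → b ∈ 𝒜 h → a * b ∈ 𝒜 (g * h))
    (J : Type) [Fintype J] [DecidableEq J]
    (deg : J → G) (e : Module.Basis J K A)
    (h𝒜 : ∀ g : G, 𝒜 g = Submodule.span K (e '' {i | deg i = g}))
    (σ : G) (α : J → K)
    (c : J → J → J → K) (hc : ∀ i j ℓ, c i j ℓ = e.repr (e i * e j) ℓ)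
    (P : Matrix J J K)
    (hP : ∀ i j, P i j = ∑ ℓ ∈ univ.filter (fun ℓ => deg ℓ = σ), α ℓ * c i j ℓ)
    (hinv : IsUnit P) :
    Fintype.card {i : J // deg i = (1 : G)} = Fintype.card {i : J // deg i = σ} ∧
    (∃ N : Matrix {j : J // deg j = σ} {i : J // deg i = (1 : G)} K,
        (Matrix.of fun (i : {i : J // deg i = (1 : G)}) (j : {j : J // deg j = σ}) =>
          P i.1 j.1) * N = 1 ∧
        N * (Matrix.of fun (i : {i : J // deg i = (1 : G)}) (j : {j : J // deg j = σ}) =>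
          P i.1 j.1) = 1) ∧
    (∀ g : G,
      (Matrix.of fun (p : {r : J // deg r = σ * g⁻¹} × {ℓ : J // deg ℓ = σ})
          (j : {j : J // deg j = g}) => c p.1.1 j.1 p.2.1).rank
        = Fintype.card {j : J // deg j = g}) := by
  classical
  -- Step 1: support of the structure constants
  have hcsupp : ∀ i j ℓ : J, c i j ℓ ≠ 0 → deg ℓ = deg i * deg j := by
    intro i j ℓ h
    have hei : e i ∈ 𝒜 (deg i) := by
      rw [h𝒜]; exact Submodule.subset_span ⟨i, rfl, rfl⟩
    have hej : e j ∈ 𝒜 (deg j) := by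
      rw [h𝒜]; exact Submodule.subset_span ⟨j, rfl, rfl⟩
    have hm := h_mul hei hej
    rw [h𝒜, Module.Basis.mem_span_image] at hm
    exact hm (Finsupp.mem_support_iff.2 (by rw [← hc]; exact h))
  -- Step 2: support of P
  have hP0 : ∀ i j : J, deg i * deg j ≠ σ → P i j = 0 := by
    intro i j hne
    rw [hP]
    refine Finset.sum_eq_zero fun ℓ hℓ => ?_
    rcases eq_or_ne (c i j ℓ) 0 with h0 | h0
    · rw [h0, mul_zero]
    · exact absurd ((hcsupp i j ℓ h0).symm.trans (Finset.mem_filter.1 hℓ).2) hne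
  -- Step 3: the key construction, for any factorization h * g = σ
  have key : ∀ h g : G, h * g = σ →
      ∃ N : Matrix {j : J // deg j = g} {i : J // deg i = h} K,
        (Matrix.of fun (i : {i : J // deg i = h}) (j : {j : J // deg j = g}) =>
          P i.1 j.1) * N = 1 ∧
        N * (Matrix.of fun (i : {i : J // deg i = h}) (j : {j : J // deg j = g}) =>
          P i.1 j.1) = 1 := by
    intro h g hhg
    set B : Matrix {i : J // deg i = h} {j : J // deg j = g} K :=
      Matrix.of fun i j => P i.1 j.1 with hBdef
    -- injectivity of the column map
    have hinj : Function.Injective (Matrix.toLin' B) := by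
      rw [← LinearMap.ker_eq_bot, LinearMap.ker_eq_bot']
      intro v hv
      set v' : J → K := fun j => if hj : deg j = g then v ⟨j, hj⟩ else 0 with hv'
      have hm0 : P.mulVec v' = 0 := by
        funext i
        simp only [Matrix.mulVec, dotProduct, Pi.zero_apply]
        have step : ∑ j : J, P i j * v' j
            = ∑ j : {j : J // deg j = g}, P i j.1 * v j := by
          rw [← Finset.sum_filter_of_ne (p := fun j => deg j = g)
              (fun j _ hne => by
                by_contra hj
                exact hne (by simp [hv', hj])),
            Finset.sum_subtype (p := fun j => deg j = g) _ (fun x => by simp) (fun j => P i j * v' j)]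
          exact Finset.sum_congr rfl fun j _ => by simp [hv', j.2]
        rw [step]
        by_cases hi : deg i = h
        · have hzero := congrFun hv ⟨i, hi⟩
          simpa [Matrix.toLin'_apply, Matrix.mulVec, dotProduct, hBdef]
            using hzero
        · refine Finset.sum_eq_zero fun j _ => ?_
          have : deg i * deg j.1 ≠ σ := by
            rw [j.2, ← hhg]
            exact fun hcon => hi (mul_right_cancel hcon)
          rw [hP0 i j.1 this, zero_mul]
      have hv'0 : v' = 0 :=
        Matrix.mulVec_injective_iff_isUnit.2 hinv
          (hm0.trans (Matrix.mulVec_zero P).symm)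
      funext j
      have := congrFun hv'0 j.1
      simpa [hv', j.2] using this
    -- injectivity of the row map
    have hinj' : Function.Injective B.vecMulLinear := by
      rw [← LinearMap.ker_eq_bot, LinearMap.ker_eq_bot']
      intro u hu
      set u' : J → K := fun i => if hi : deg i = h then u ⟨i, hi⟩ else 0 with hu'
      have hm0 : P.vecMul u' = 0 := by
        funext j
        simp only [Matrix.vecMul, dotProduct, Pi.zero_apply]
        have step : ∑ i : J, u' i * P i j
            = ∑ i : {i : J // deg i = h}, u i * P i.1 j := by
          rw [← Finset.sum_filter_of_ne (p := fun i => deg i = h)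
              (fun i _ hne => by
                by_contra hi
                exact hne (by simp [hu', hi])),
            Finset.sum_subtype (p := fun i => deg i = h) _ (fun x => by simp) (fun i => u' i * P i j)]
          exact Finset.sum_congr rfl fun i _ => by simp [hu', i.2]
        rw [step]
        by_cases hj : deg j = g
        · have hzero := congrFun hu ⟨j, hj⟩
          simpa [Matrix.vecMulLinear_apply, Matrix.vecMul, dotProduct, hBdef]
            using hzero
        · refine Finset.sum_eq_zero fun i _ => ?_
          have : deg i.1 * deg j ≠ σ := by
            rw [i.2, ← hhg]
            exact fun hcon => hj (mul_left_cancel hcon)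
          rw [hP0 i.1 j this, mul_zero]
      have hu'0 : u' = 0 :=
        Matrix.vecMul_injective_iff_isUnit.2 hinv
          (hm0.trans (Matrix.zero_vecMul P).symm)
      funext i
      have := congrFun hu'0 i.1
      simpa [hu', i.2] using this
    -- equality of cardinalities
    have hle1 : Fintype.card {j : J // deg j = g} ≤ Fintype.card {i : J // deg i = h} := by
      have := LinearMap.finrank_le_finrank_of_injective hinj
      simpa [Module.finrank_fintype_fun_eq_card] using this
    have hle2 : Fintype.card {i : J // deg i = h} ≤ Fintype.card {j : J // deg j = g} := by
      have := LinearMap.finrank_le_finrank_of_injective hinj'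
      simpa [Module.finrank_fintype_fun_eq_card] using this
    have hcard : Fintype.card {j : J // deg j = g} = Fintype.card {i : J // deg i = h} :=
      le_antisymm hle1 hle2
    -- bijectivity
    have hsurj : Function.Surjective (Matrix.toLin' B) := by
      rw [← LinearMap.injective_iff_surjective_of_finrank_eq_finrank
        (by simp [Module.finrank_fintype_fun_eq_card, hcard])]
      exact hinj
    set eqv := LinearEquiv.ofBijective (Matrix.toLin' B) ⟨hinj, hsurj⟩ with heqv
    refine ⟨LinearMap.toMatrix' (eqv.symm :
      ({i : J // deg i = h} → K) →ₗ[K] ({j : J // deg j = g} → K)), ?_, ?_⟩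
    · apply Matrix.toLin'.injective
      rw [Matrix.toLin'_mul, Matrix.toLin'_toMatrix', Matrix.toLin'_one]
      refine LinearMap.ext fun x => ?_
      have := eqv.apply_symm_apply x
      exact this
    · apply Matrix.toLin'.injective
      rw [Matrix.toLin'_mul, Matrix.toLin'_toMatrix', Matrix.toLin'_one]
      refine LinearMap.ext fun x => ?_
      have := eqv.symm_apply_apply x
      exact this
  -- Part 2 (and part 1)
  obtain ⟨N₀, hN₀1, hN₀2⟩ := key 1 σ (one_mul σ)
  have part1 : Fintype.card {i : J // deg i = (1 : G)} = Fintype.card {i : J // deg i = σ} := by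
    set B : Matrix {i : J // deg i = (1 : G)} {j : J // deg j = σ} K :=
      Matrix.of fun i j => P i.1 j.1 with hBdef
    have h1 : Fintype.card {i : J // deg i = (1 : G)} ≤ Fintype.card {i : J // deg i = σ} := by
      have : ((B * N₀).rank) ≤ B.rank := Matrix.rank_mul_le_left B N₀
      rw [hN₀1, Matrix.rank_one] at this
      exact this.trans (Matrix.rank_le_card_width B)
    have h2 : Fintype.card {i : J // deg i = σ} ≤ Fintype.card {i : J // deg i = (1 : G)} := by
      have : ((N₀ * B).rank) ≤ B.rank := Matrix.rank_mul_le_right N₀ B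
      rw [hN₀2, Matrix.rank_one] at this
      exact this.trans (Matrix.rank_le_card_height B)
    exact le_antisymm h1 h2
  refine ⟨part1, ⟨N₀, hN₀1, hN₀2⟩, ?_⟩
  -- Part 3: rank of C_g
  intro g
  obtain ⟨N, hN1, hN2⟩ := key (σ * g⁻¹) g (inv_mul_cancel_right σ g)
  set B : Matrix {i : J // deg i = σ * g⁻¹} {j : J // deg j = g} K :=
    Matrix.of fun i j => P i.1 j.1 with hBdef
  set Cmat : Matrix ({r : J // deg r = σ * g⁻¹} × {ℓ : J // deg ℓ = σ})
      {j : J // deg j = g} K :=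
    Matrix.of fun p j => c p.1.1 j.1 p.2.1 with hCdef
  set L : Matrix {i : J // deg i = σ * g⁻¹}
      ({r : J // deg r = σ * g⁻¹} × {ℓ : J // deg ℓ = σ}) K :=
    Matrix.of fun r p => if p.1 = r then α p.2.1 else 0 with hLdef
  have hLC : B = L * Cmat := by
    ext r j
    rw [Matrix.mul_apply, Fintype.sum_prod_type]
    rw [Finset.sum_eq_single r]
    · have : ∀ ℓ : {ℓ : J // deg ℓ = σ},
          L r (r, ℓ) * Cmat (r, ℓ) j = α ℓ.1 * c r.1 j.1 ℓ.1 := by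
        intro ℓ; simp [hLdef, hCdef]
      rw [Finset.sum_congr rfl fun ℓ _ => this ℓ]
      rw [hBdef]
      show P r.1 j.1 = _
      rw [hP]
      rw [Finset.sum_subtype (p := fun ℓ => deg ℓ = σ) _ (fun x => by simp) (fun ℓ => α ℓ * c r.1 j.1 ℓ)]
    · intro r' _ hne
      refine Finset.sum_eq_zero fun ℓ _ => ?_
      simp [hLdef, hne]
    · intro habs
      exact absurd (Finset.mem_univ r) habs
  have hrank_le : Cmat.rank ≤ Fintype.card {j : J // deg j = g} :=
    Matrix.rank_le_card_width Cmat
  have hrank_ge : Fintype.card {j : J // deg j = g} ≤ Cmat.rank := by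
    have h1 : (N * B).rank = Fintype.card {j : J // deg j = g} := by
      rw [hN2, Matrix.rank_one]
    have h2 : N * B = (N * L) * Cmat := by rw [hLC, Matrix.mul_assoc]
    calc Fintype.card {j : J // deg j = g} = (N * B).rank := h1.symm
      _ = ((N * L) * Cmat).rank := by rw [h2]
      _ ≤ Cmat.rank := Matrix.rank_mul_le_right (N * L) Cmat
  exact le_antisymm hrank_le hrank_ge
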